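/- Let p be a polynomial with real coefficients. Then p ∈ 𝒫₂ if and only if both of the following hold: (i) p(ρ) ≥ |p(μ)| for all real ρ, μ with ρ ≥ |μ|; and (ii) ρ·p(−μ) + μ·p(ρ) ≥ 0 for all real ρ, μ with 0 < μ ≤ ρ. -/

import Mathlib

open Polynomial Matrix


lemma aeval_formula (p : Polynomial ℝ) (A : Matrix (Fin 2) (Fin 2) ℝ) (l1 l2 : ℝ)
    (hne : l1 ≠ l2)
    (htr : A 0 0 + A 1 1 = l1 + l2)
    (hdet : A 0 0 * A 1 1 - A 0 1 * A 1 0 = l1 * l2) :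
    Polynomial.aeval A p = ((p.eval l1 - p.eval l2) / (l1 - l2)) • A +
      ((l1 * p.eval l2 - l2 * p.eval l1) / (l1 - l2)) • (1 : Matrix (Fin 2) (Fin 2) ℝ) := by
  set α : ℝ := (p.eval l1 - p.eval l2) / (l1 - l2) with hα
  set β : ℝ := (l1 * p.eval l2 - l2 * p.eval l1) / (l1 - l2) with hβ
  have hsub : l1 - l2 ≠ 0 := sub_ne_zero.mpr hne
  set r : Polynomial ℝ := C α * X + C β with hr
  have h1 : (p - r).IsRoot l1 := by
    simp only [IsRoot, eval_sub, hr, eval_add, eval_mul, eval_C, eval_X, hα, hβ]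
    field_simp
    ring
  have h2 : (p - r).IsRoot l2 := by
    simp only [IsRoot, eval_sub, hr, eval_add, eval_mul, eval_C, eval_X, hα, hβ]
    field_simp
    ring
  have hsub2 : l2 - l1 ≠ 0 := sub_ne_zero.mpr hne.symm
  have hcop : IsCoprime (X - C l1) (X - C l2 : Polynomial ℝ) := by
    refine ⟨C ((l2 - l1)⁻¹), -C ((l2 - l1)⁻¹), ?_⟩
    have : C ((l2 - l1)⁻¹) * (X - C l1) + -C ((l2 - l1)⁻¹) * (X - C l2)
        = C ((l2 - l1)⁻¹) * C (l2 - l1) := by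
      rw [map_sub]; ring
    rw [this, ← C_mul, inv_mul_cancel₀ hsub2, C_1]
  obtain ⟨q, hq⟩ : (X - C l1) * (X - C l2) ∣ (p - r) :=
    hcop.mul_dvd (dvd_iff_isRoot.mpr h1) (dvd_iff_isRoot.mpr h2)
  have hCH : (A - l1 • 1) * (A - l2 • 1) = (0 : Matrix (Fin 2) (Fin 2) ℝ) := by
    ext i j
    fin_cases i <;> fin_cases j <;>
      simp [Matrix.mul_apply, Fin.sum_univ_two, Matrix.one_apply, smul_eq_mul] <;>
      first
        | linear_combination A 0 0 * htr - hdet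
        | linear_combination A 1 1 * htr - hdet
        | linear_combination A 0 1 * htr
        | linear_combination A 1 0 * htr
  have hp : p = r + (X - C l1) * (X - C l2) * q := by
    rw [← hq]; ring
  have : Polynomial.aeval A p = Polynomial.aeval A r +
      ((A - l1 • 1) * (A - l2 • 1)) * Polynomial.aeval A q := by
    rw [hp]
    simp only [map_add, _root_.map_mul, map_sub, aeval_X, aeval_C,
      Algebra.algebraMap_eq_smul_one]
  rw [this, hCH, zero_mul, add_zero, hr]
  simp only [map_add, _root_.map_mul, aeval_X, aeval_C, Algebra.algebraMap_eq_smul_one]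
  rw [smul_mul_assoc, one_mul]

lemma core (p : Polynomial ℝ)
    (h1 : ∀ ρ μ : ℝ, |μ| ≤ ρ → |p.eval μ| ≤ p.eval ρ)
    (h2 : ∀ ρ μ : ℝ, 0 < μ → μ ≤ ρ → 0 ≤ ρ * p.eval (-μ) + μ * p.eval ρ)
    (A : Matrix (Fin 2) (Fin 2) ℝ) (hA : ∀ i j, 0 ≤ A i j)
    (hbc : 0 < A 0 1 * A 1 0) :
    ∀ i j, 0 ≤ (Polynomial.aeval A p) i j := by
  set a := A 0 0
  set b := A 0 1
  set c := A 1 0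
  set d := A 1 1
  set D : ℝ := (a - d) ^ 2 + 4 * (b * c) with hD
  have hDpos : 0 < D := by positivity
  set s : ℝ := Real.sqrt D with hsdef
  have hs : 0 < s := Real.sqrt_pos.mpr hDpos
  have hs2 : s ^ 2 = D := Real.sq_sqrt hDpos.le
  set l1 : ℝ := ((a + d) + s) / 2 with hl1
  set l2 : ℝ := ((a + d) - s) / 2 with hl2
  have hl1l2 : l1 - l2 = s := by rw [hl1, hl2]; ring
  have hne : l1 ≠ l2 := by
    intro h; rw [h] at hl1l2; simp at hl1l2; linarith
  have htr : A 0 0 + A 1 1 = l1 + l2 := by rw [hl1, hl2]; ring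
  have hdet : A 0 0 * A 1 1 - A 0 1 * A 1 0 = l1 * l2 := by
    rw [hl1, hl2]
    have hDe : s ^ 2 = (a - d) ^ 2 + 4 * (b * c) := by rw [hs2, hD]
    linear_combination ((1:ℝ)/4) * hDe
  have habs : |a - d| ≤ s := by
    rw [hsdef, ← Real.sqrt_sq_eq_abs]
    exact Real.sqrt_le_sqrt (by nlinarith)
  obtain ⟨habs1, habs2⟩ := abs_le.mp habs
  have ha0 : 0 ≤ a := hA 0 0
  have hb0 : 0 ≤ b := hA 0 1
  have hc0 : 0 ≤ c := hA 1 0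
  have hd0 : 0 ≤ d := hA 1 1
  have hal1 : a ≤ l1 := by rw [hl1]; linarith
  have hdl1 : d ≤ l1 := by rw [hl1]; linarith
  have hl2a : l2 ≤ a := by rw [hl2]; linarith
  have hl2d : l2 ≤ d := by rw [hl2]; linarith
  have hl2abs : |l2| ≤ l1 := by
    rw [abs_le]; constructor
    · rw [hl1, hl2]; linarith
    · rw [hl1, hl2]; linarith
  have hpl : |p.eval l2| ≤ p.eval l1 := h1 l1 l2 hl2abs
  obtain ⟨hpl1, hpl2⟩ := abs_le.mp hpl
  -- numerator nonnegativity for diagonal entries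
  have hnum : ∀ x : ℝ, 0 ≤ x → l2 ≤ x → x ≤ l1 →
      0 ≤ p.eval l1 * (x - l2) + p.eval l2 * (l1 - x) := by
    intro x hx hxl2 hxl1
    rcases le_or_gt 0 l2 with hc2 | hc2
    · have hp2 : 0 ≤ p.eval l2 := by
        have := h1 l2 l2 (by rw [abs_of_nonneg hc2])
        have := abs_nonneg (p.eval l2)
        linarith [abs_le.mp (h1 l2 l2 (by rw [abs_of_nonneg hc2]))]
      have hp1 : 0 ≤ p.eval l1 := le_trans (abs_nonneg _) hpl
      nlinarith
    · have hkey := h2 l1 (-l2) (by linarith) (by linarith [abs_le.mp hl2abs |>.1])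
      rw [neg_neg] at hkey
      nlinarith
  rw [aeval_formula p A l1 l2 hne htr hdet]
  intro i j
  have hα : 0 ≤ (p.eval l1 - p.eval l2) / (l1 - l2) := by
    apply div_nonneg (by linarith) (by rw [hl1l2]; linarith)
  fin_cases i <;> fin_cases j <;>
    simp [Matrix.add_apply, Matrix.smul_apply, Matrix.one_apply, smul_eq_mul]
  · have heq : (p.eval l1 - p.eval l2) / (l1 - l2) * a + (l1 * p.eval l2 - l2 * p.eval l1) / (l1 - l2)
        = (p.eval l1 * (a - l2) + p.eval l2 * (l1 - a)) / (l1 - l2) := by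
      rw [div_mul_eq_mul_div, ← add_div]; ring_nf
    rw [heq, hl1l2]
    exact div_nonneg (hnum a ha0 hl2a hal1) hs.le
  · exact mul_nonneg hα hb0
  · exact mul_nonneg hα hc0
  · have heq : (p.eval l1 - p.eval l2) / (l1 - l2) * d + (l1 * p.eval l2 - l2 * p.eval l1) / (l1 - l2)
        = (p.eval l1 * (d - l2) + p.eval l2 * (l1 - d)) / (l1 - l2) := by
      rw [div_mul_eq_mul_div, ← add_div]; ring_nf
    rw [heq, hl1l2]
    exact div_nonneg (hnum d hd0 hl2d hdl1) hs.le


theorem stmt6 (p : Polynomial ℝ) :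
    (∀ A : Matrix (Fin 2) (Fin 2) ℝ, (∀ i j, 0 ≤ A i j) →
      ∀ i j, 0 ≤ (Polynomial.aeval A p) i j) ↔
    ((∀ ρ μ : ℝ, |μ| ≤ ρ → |p.eval μ| ≤ p.eval ρ) ∧
     (∀ ρ μ : ℝ, 0 < μ → μ ≤ ρ → 0 ≤ ρ * p.eval (-μ) + μ * p.eval ρ)) := by
  constructor
  · intro h
    constructor
    · intro ρ μ hμ
      obtain ⟨hμ1, hμ2⟩ := abs_le.mp hμ
      by_cases hρμ : ρ = μ
      · -- scalar matrix case
        subst hρμ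
        have hρ0 : 0 ≤ ρ := by
          rcases abs_cases ρ with ⟨he, _⟩ | ⟨_, hneg⟩ <;> linarith
        have hSm : ∀ i j, (0:ℝ) ≤ (algebraMap ℝ (Matrix (Fin 2) (Fin 2) ℝ) ρ) i j := by
          intro i j
          rw [Algebra.algebraMap_eq_smul_one]
          fin_cases i <;> fin_cases j <;>
            simp [Matrix.smul_apply, Matrix.one_apply, smul_eq_mul] <;> positivity
        have := h _ hSm 0 0
        rw [aeval_algebraMap_apply_eq_algebraMap_eval, Algebra.algebraMap_eq_smul_one] at this
        simp [Matrix.smul_apply, Matrix.one_apply, smul_eq_mul] at this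
        rw [abs_le]; constructor <;> linarith
      · have hρμ' : μ < ρ := lt_of_le_of_ne hμ2 (Ne.symm hρμ)
        set A : Matrix (Fin 2) (Fin 2) ℝ :=
          !![(ρ + μ)/2, (ρ - μ)/2; (ρ - μ)/2, (ρ + μ)/2] with hAdef
        have hA : ∀ i j, 0 ≤ A i j := by
          intro i j; fin_cases i <;> fin_cases j <;> simp [hAdef] <;> linarith
        have hform := aeval_formula p A ρ μ hρμ (by simp [hAdef]; try ring)
          (by simp [hAdef]; try ring)
        have e1 := h A hA 0 0
        have e2 := h A hA 0 1
        rw [hform] at e1 e2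
        simp [Matrix.add_apply, Matrix.smul_apply, Matrix.one_apply, smul_eq_mul, hAdef] at e1 e2
        have hsub : ρ - μ ≠ 0 := by linarith
        have k2 : (p.eval ρ - p.eval μ) / (ρ - μ) * ((ρ - μ)/2) = (p.eval ρ - p.eval μ)/2 := by
          field_simp
        have k1 : (p.eval ρ - p.eval μ) / (ρ - μ) * ((ρ + μ)/2)
            + (ρ * p.eval μ - μ * p.eval ρ) / (ρ - μ) = (p.eval ρ + p.eval μ)/2 := by
          field_simp; ring
        rw [k2] at e2
        rw [k1] at e1
        rw [abs_le]; constructor <;> linarith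
    · intro ρ μ hμ hμρ
      set B : Matrix (Fin 2) (Fin 2) ℝ := !![ρ - μ, ρ * μ; 1, 0] with hBdef
      have hB : ∀ i j, 0 ≤ B i j := by
        intro i j; fin_cases i <;> fin_cases j <;> simp [hBdef] <;> nlinarith
      have hne : ρ ≠ -μ := by intro he; nlinarith
      have hform := aeval_formula p B ρ (-μ) hne (by simp [hBdef]; try ring)
        (by simp [hBdef]; try ring)
      have e := h B hB 1 1
      rw [hform] at e
      simp [Matrix.add_apply, Matrix.smul_apply, Matrix.one_apply, smul_eq_mul, hBdef] at e
      rw [div_nonneg_iff] at e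
      rcases e with ⟨hnum, _⟩ | ⟨_, hden⟩
      · linarith
      · exfalso; linarith
  · rintro ⟨h1, h2⟩ A hA i j
    set J : Matrix (Fin 2) (Fin 2) ℝ := !![0, 1; 1, 0] with hJdef
    have hcont : ContinuousWithinAt
        (fun ε : ℝ => (Polynomial.aeval (A + ε • J) p) i j) (Set.Ioi 0) 0 := by
      apply Continuous.continuousWithinAt
      have c1 : Continuous fun M : Matrix (Fin 2) (Fin 2) ℝ => (Polynomial.aeval M p) i j := by
        fun_prop
      have c2 : Continuous fun ε : ℝ => A + ε • J := by fun_prop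
      exact c1.comp c2
    have hev : ∀ ε ∈ Set.Ioi (0:ℝ), 0 ≤ (Polynomial.aeval (A + ε • J) p) i j := by
      intro ε hε
      rw [Set.mem_Ioi] at hε
      apply core p h1 h2
      · intro i' j'
        fin_cases i' <;> fin_cases j' <;>
          simp [Matrix.add_apply, Matrix.smul_apply, hJdef] <;>
          linarith [hA 0 0, hA 0 1, hA 1 0, hA 1 1]
      · have : (A + ε • J) 0 1 = A 0 1 + ε := by simp [hJdef]
        have h2' : (A + ε • J) 1 0 = A 1 0 + ε := by simp [hJdef]
        rw [this, h2']
        have := hA 0 1; have := hA 1 0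
        positivity
    have htend : Filter.Tendsto (fun ε : ℝ => (Polynomial.aeval (A + ε • J) p) i j)
        (nhdsWithin 0 (Set.Ioi 0)) (nhds ((Polynomial.aeval (A + (0:ℝ) • J) p) i j)) :=
      hcont.tendsto
    have h0 : (Polynomial.aeval (A + (0:ℝ) • J) p) i j = (Polynomial.aeval A p) i j := by
      simp
    rw [h0] at htend
    exact ge_of_tendsto htend (Filter.eventually_of_mem self_mem_nhdsWithin hev)
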